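/- In a finite MDP with a bounded reward function and a finite action space, there exists an optimal policy that is stationary and deterministic; that is, the supremum of the expected discounted return (with discount factor γ ∈ [0,1)) over all policies is attained by a stationary deterministic policy. -/

import Mathlib

open Filter Topology

section MDPaux
variable {S A : Type} [Fintype S] [Fintype A] [Nonempty S] [Nonempty A]

/-- Bellman optimality operator. -/
noncomputable def Topt (P : S → A → S → ℝ) (r : S → A → ℝ) (γ : ℝ) (V : S → ℝ) (s : S) : ℝ :=
  Finset.univ.sup' Finset.univ_nonempty (fun a => r s a + γ * ∑ s' : S, P s a s' * V s')

/-- Bellman operator for a stationary deterministic policy. -/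
noncomputable def Tpol (P : S → A → S → ℝ) (r : S → A → ℝ) (γ : ℝ) (σ : S → A)
    (V : S → ℝ) (s : S) : ℝ :=
  r s (σ s) + γ * ∑ s' : S, P s (σ s) s' * V s'

theorem key_dist (P : S → A → S → ℝ) (hPnn : ∀ s a s', 0 ≤ P s a s')
    (hPsum : ∀ s a, ∑ s' : S, P s a s' = 1) (r : S → A → ℝ) (γ : ℝ) (hγ0 : 0 ≤ γ)
    (a : A) (V W : S → ℝ) (s : S) :
    |(r s a + γ * ∑ s' : S, P s a s' * V s') - (r s a + γ * ∑ s' : S, P s a s' * W s')|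
      ≤ γ * dist V W := by
  have h1 : (r s a + γ * ∑ s' : S, P s a s' * V s') - (r s a + γ * ∑ s' : S, P s a s' * W s')
      = γ * ∑ s' : S, P s a s' * (V s' - W s') := by
    rw [Finset.mul_sum, Finset.mul_sum, Finset.mul_sum]
    ring_nf
    rw [← Finset.sum_sub_distrib]
  rw [h1, abs_mul, abs_of_nonneg hγ0]
  refine mul_le_mul_of_nonneg_left ?_ hγ0
  calc |∑ s' : S, P s a s' * (V s' - W s')| ≤ ∑ s' : S, |P s a s' * (V s' - W s')| :=
        Finset.abs_sum_le_sum_abs _ _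
    _ ≤ ∑ s' : S, P s a s' * dist V W := by
        refine Finset.sum_le_sum fun s' _ => ?_
        rw [abs_mul, abs_of_nonneg (hPnn s a s')]
        refine mul_le_mul_of_nonneg_left ?_ (hPnn s a s')
        calc |V s' - W s'| = dist (V s') (W s') := (Real.dist_eq _ _).symm
          _ ≤ dist V W := dist_le_pi_dist V W s'
    _ = dist V W := by rw [← Finset.sum_mul, hPsum, one_mul]

theorem Topt_lip (P : S → A → S → ℝ) (hPnn : ∀ s a s', 0 ≤ P s a s')
    (hPsum : ∀ s a, ∑ s' : S, P s a s' = 1) (r : S → A → ℝ) (γ : ℝ) (hγ0 : 0 ≤ γ)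
    (V W : S → ℝ) : dist (Topt P r γ V) (Topt P r γ W) ≤ γ * dist V W := by
  rw [dist_pi_le_iff (mul_nonneg hγ0 dist_nonneg)]
  intro s
  rw [Real.dist_eq, abs_sub_le_iff]
  constructor
  · rw [sub_le_iff_le_add, Topt]
    refine Finset.sup'_le _ _ fun a _ => ?_
    have := key_dist P hPnn hPsum r γ hγ0 a V W s
    have h2 := (abs_le.mp this).2
    calc r s a + γ * ∑ s' : S, P s a s' * V s'
        ≤ (r s a + γ * ∑ s' : S, P s a s' * W s') + γ * dist V W := by linarith
      _ ≤ Topt P r γ W s + γ * dist V W := by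
          have := Finset.le_sup' (f := fun a => r s a + γ * ∑ s' : S, P s a s' * W s')
            (Finset.mem_univ a)
          unfold Topt; linarith
      _ = γ * dist V W + Topt P r γ W s := by ring
  · rw [sub_le_iff_le_add, Topt]
    refine Finset.sup'_le _ _ fun a _ => ?_
    have := key_dist P hPnn hPsum r γ hγ0 a V W s
    have h2 := (abs_le.mp this).1
    calc r s a + γ * ∑ s' : S, P s a s' * W s'
        ≤ (r s a + γ * ∑ s' : S, P s a s' * V s') + γ * dist V W := by linarith
      _ ≤ Topt P r γ V s + γ * dist V W := by
          have := Finset.le_sup' (f := fun a => r s a + γ * ∑ s' : S, P s a s' * V s')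
            (Finset.mem_univ a)
          unfold Topt; linarith
      _ = γ * dist V W + Topt P r γ V s := by ring

theorem Tpol_lip (P : S → A → S → ℝ) (hPnn : ∀ s a s', 0 ≤ P s a s')
    (hPsum : ∀ s a, ∑ s' : S, P s a s' = 1) (r : S → A → ℝ) (γ : ℝ) (hγ0 : 0 ≤ γ)
    (σ : S → A) (V W : S → ℝ) : dist (Tpol P r γ σ V) (Tpol P r γ σ W) ≤ γ * dist V W := by
  rw [dist_pi_le_iff (mul_nonneg hγ0 dist_nonneg)]
  intro s
  rw [Real.dist_eq]
  exact key_dist P hPnn hPsum r γ hγ0 (σ s) V W s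

theorem iter_contract (γ : ℝ) (hγ0 : 0 ≤ γ) (F : (S → ℝ) → (S → ℝ))
    (hF : ∀ V W, dist (F V) (F W) ≤ γ * dist V W) :
    ∀ (n : ℕ) (x y : S → ℝ), dist (F^[n] x) (F^[n] y) ≤ γ ^ n * dist x y := by
  intro n
  induction n with
  | zero => intro x y; simp
  | succ n ih =>
    intro x y
    rw [Function.iterate_succ_apply', Function.iterate_succ_apply']
    calc dist (F (F^[n] x)) (F (F^[n] y)) ≤ γ * dist (F^[n] x) (F^[n] y) := hF _ _
      _ ≤ γ * (γ ^ n * dist x y) := mul_le_mul_of_nonneg_left (ih x y) hγ0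
      _ = γ ^ (n + 1) * dist x y := by ring

end MDPaux

/-- Finite-horizon expected discounted return of a (randomized, history-dependent)
policy `π : List S → A → ℝ`, where the policy is evaluated on the history of visited
states with the current state at the head. -/
noncomputable def VfinHist {S A : Type} [Fintype S] [Fintype A]
    (P : S → A → S → ℝ) (r : S → A → ℝ) (γ : ℝ) (π : List S → A → ℝ) :
    ℕ → List S → S → ℝ
  | 0, _, _ => 0
  | n + 1, h, s =>
      ∑ a : A, π (s :: h) a *
        (r s a + γ * ∑ s' : S, P s a s' * VfinHist P r γ π n (s :: h) s')

/-- The (randomized, history-dependent) policy induced by a stationary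
deterministic policy `σ : S → A`. -/
noncomputable def statDetPolicy {S A : Type} [DecidableEq A] (σ : S → A) :
    List S → A → ℝ
  | [], _ => 0
  | s :: _, a => if a = σ s then 1 else 0

/-- In a finite MDP with bounded rewards and discount factor `γ ∈ [0,1)`, the
supremum of the expected discounted return over all (randomized,
history-dependent) policies is attained by a stationary deterministic policy. -/
theorem exists_optimal_stationary_deterministic_policy
    {S A : Type} [Fintype S] [Fintype A] [Nonempty S] [Nonempty A] [DecidableEq A]
    (P : S → A → S → ℝ)
    (hPnn : ∀ s a s', 0 ≤ P s a s') (hPsum : ∀ s a, ∑ s' : S, P s a s' = 1)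
    (r : S → A → ℝ) (rmax : ℝ) (hr : ∀ s a, |r s a| ≤ rmax)
    (γ : ℝ) (hγ0 : 0 ≤ γ) (hγ1 : γ < 1) :
    ∃ σ : S → A, ∀ s : S,
      ∃ Vstar : ℝ,
        Tendsto (fun n => VfinHist P r γ (statDetPolicy σ) n [] s) atTop (𝓝 Vstar) ∧
        ∀ (π : List S → A → ℝ),
          (∀ h a, 0 ≤ π h a) → (∀ (h : List S) (s₀ : S), ∑ a : A, π (s₀ :: h) a = 1) →
          ∀ Vπ : ℝ,
            Tendsto (fun n => VfinHist P r γ π n [] s) atTop (𝓝 Vπ) →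
            Vπ ≤ Vstar := by
  classical
  -- the optimal value function, as the fixed point of the Bellman operator
  set κ : NNReal := ⟨γ, hγ0⟩ with hκdef
  have hκγ : (κ : ℝ) = γ := rfl
  have hlip : LipschitzWith κ (Topt P r γ) :=
    LipschitzWith.of_dist_le_mul (by
      intro V W; rw [hκγ]; exact Topt_lip P hPnn hPsum r γ hγ0 V W)
  have hcontr : ContractingWith κ (Topt P r γ) := ⟨by rw [← NNReal.coe_lt_one, hκγ]; exact hγ1, hlip⟩
  set Vs : S → ℝ := ContractingWith.fixedPoint (Topt P r γ) hcontr with hVsdef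
  have hfix : Topt P r γ Vs = Vs := hcontr.fixedPoint_isFixedPt
  -- choose the greedy policy
  have hσex : ∀ s : S, ∃ a : A, Topt P r γ Vs s = r s a + γ * ∑ s' : S, P s a s' * Vs s' := by
    intro s
    obtain ⟨a, -, ha⟩ := Finset.exists_mem_eq_sup' (Finset.univ_nonempty (α := A))
      (fun a => r s a + γ * ∑ s' : S, P s a s' * Vs s')
    exact ⟨a, ha⟩
  choose σ hσ using hσex
  have hTpolfix : Tpol P r γ σ Vs = Vs := by
    funext s
    rw [Tpol, ← hσ s]
    exact congrFun hfix s
  set C : ℝ := dist (0 : S → ℝ) Vs with hCdef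
  -- generic convergence helper
  have tends : ∀ (f : ℕ → ℝ) (L : ℝ), (∀ n, dist (f n) L ≤ γ ^ n * C) →
      Tendsto f atTop (𝓝 L) := by
    intro f L hb
    rw [tendsto_iff_dist_tendsto_zero]
    have hlim : Tendsto (fun n => γ ^ n * C) atTop (𝓝 0) := by
      simpa using (tendsto_pow_atTop_nhds_zero_of_lt_one hγ0 hγ1).mul_const C
    exact squeeze_zero (fun n => dist_nonneg) hb hlim
  -- the stationary deterministic policy's finite-horizon values
  have hVσ : ∀ (n : ℕ) (h : List S) (s : S),
      VfinHist P r γ (statDetPolicy σ) n h s = (Tpol P r γ σ)^[n] 0 s := by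
    intro n
    induction n with
    | zero => intro h s; simp [VfinHist]
    | succ n ih =>
      intro h s
      rw [Function.iterate_succ_apply']
      show (∑ a : A, statDetPolicy σ (s :: h) a *
          (r s a + γ * ∑ s' : S, P s a s' * VfinHist P r γ (statDetPolicy σ) n (s :: h) s'))
        = Tpol P r γ σ ((Tpol P r γ σ)^[n] 0) s
      simp only [statDetPolicy, ih, ite_mul, one_mul, zero_mul]
      rw [Finset.sum_ite_eq' Finset.univ (σ s)]
      simp [Tpol]
  -- upper bound for arbitrary policies
  have hπle : ∀ (π : List S → A → ℝ), (∀ h a, 0 ≤ π h a) →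
      (∀ (h : List S) (s₀ : S), ∑ a : A, π (s₀ :: h) a = 1) →
      ∀ (n : ℕ) (h : List S) (s : S),
        VfinHist P r γ π n h s ≤ (Topt P r γ)^[n] 0 s := by
    intro π hπ0 hπ1 n
    induction n with
    | zero => intro h s; simp [VfinHist]
    | succ n ih =>
      intro h s
      rw [Function.iterate_succ_apply']
      show (∑ a : A, π (s :: h) a *
          (r s a + γ * ∑ s' : S, P s a s' * VfinHist P r γ π n (s :: h) s'))
        ≤ Topt P r γ ((Topt P r γ)^[n] 0) s
      calc (∑ a : A, π (s :: h) a *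
            (r s a + γ * ∑ s' : S, P s a s' * VfinHist P r γ π n (s :: h) s'))
          ≤ ∑ a : A, π (s :: h) a * Topt P r γ ((Topt P r γ)^[n] 0) s := by
            refine Finset.sum_le_sum fun a _ => ?_
            refine mul_le_mul_of_nonneg_left ?_ (hπ0 _ _)
            calc r s a + γ * ∑ s' : S, P s a s' * VfinHist P r γ π n (s :: h) s'
                ≤ r s a + γ * ∑ s' : S, P s a s' * (Topt P r γ)^[n] 0 s' := by
                  refine add_le_add_right (mul_le_mul_of_nonneg_left ?_ hγ0) _
                  exact Finset.sum_le_sum fun s' _ =>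
                    mul_le_mul_of_nonneg_left (ih (s :: h) s') (hPnn s a s')
              _ ≤ Topt P r γ ((Topt P r γ)^[n] 0) s :=
                  Finset.le_sup' (f := fun a => r s a + γ * ∑ s' : S,
                    P s a s' * (Topt P r γ)^[n] 0 s') (Finset.mem_univ a)
        _ = Topt P r γ ((Topt P r γ)^[n] 0) s := by
            rw [← Finset.sum_mul, hπ1, one_mul]
  -- convergence of the iterates to the fixed point
  have hTopt_iter : ∀ (n : ℕ) (s : S), dist ((Topt P r γ)^[n] 0 s) (Vs s) ≤ γ ^ n * C := by
    intro n s
    calc dist ((Topt P r γ)^[n] 0 s) (Vs s) ≤ dist ((Topt P r γ)^[n] 0) Vs :=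
          dist_le_pi_dist _ _ s
      _ = dist ((Topt P r γ)^[n] 0) ((Topt P r γ)^[n] Vs) := by
          rw [(Function.IsFixedPt.iterate hfix n : (Topt P r γ)^[n] Vs = Vs)]
      _ ≤ γ ^ n * C := iter_contract γ hγ0 _ (Topt_lip P hPnn hPsum r γ hγ0) n 0 Vs
  have hTpol_iter : ∀ (n : ℕ) (s : S), dist ((Tpol P r γ σ)^[n] 0 s) (Vs s) ≤ γ ^ n * C := by
    intro n s
    calc dist ((Tpol P r γ σ)^[n] 0 s) (Vs s) ≤ dist ((Tpol P r γ σ)^[n] 0) Vs :=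
          dist_le_pi_dist _ _ s
      _ = dist ((Tpol P r γ σ)^[n] 0) ((Tpol P r γ σ)^[n] Vs) := by
          rw [(Function.IsFixedPt.iterate hTpolfix n : (Tpol P r γ σ)^[n] Vs = Vs)]
      _ ≤ γ ^ n * C := iter_contract γ hγ0 _ (Tpol_lip P hPnn hPsum r γ hγ0 σ) n 0 Vs
  refine ⟨σ, fun s => ⟨Vs s, ?_, ?_⟩⟩
  · refine tends _ _ fun n => ?_
    rw [hVσ n [] s]
    exact hTpol_iter n s
  · intro π hπ0 hπ1 Vπ hVπ
    have h1 : Tendsto (fun n => (Topt P r γ)^[n] 0 s) atTop (𝓝 (Vs s)) :=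
      tends _ _ fun n => hTopt_iter n s
    exact le_of_tendsto_of_tendsto' hVπ h1 fun n => hπle π hπ0 hπ1 n [] s
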